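/- arXiv:1503.08112 — 2 statements merged into one kernel-verified Lean document; each statement's English description precedes it below -/
import Mathlib

section
/- Let 0 < r < R and let γ be a piecewise smooth closed curve in the annulus A = A(r,R) whose winding number about 0 equals n ≠ 0. Then the hyperbolic length ℓ(γ) of γ in A satisfies ℓ(γ) ≥ 2π²|n| / log(R/r). -/
open Set Function

noncomputable section

/-- An entire function: holomorphic on all of ℂ. -/
def Entire (f : ℂ → ℂ) : Prop := Differentiable ℂ f

/-- A transcendental entire function: entire and not a polynomial. -/
def TranscendentalEntire (f : ℂ → ℂ) : Prop :=
  Entire f ∧ ∀ p : Polynomial ℂ, f ≠ fun z => Polynomial.eval z p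

/-- Two functions are permutable (commuting) if `f ∘ g = g ∘ f`. -/
def Permutable (f g : ℂ → ℂ) : Prop := f ∘ g = g ∘ f

/-- The spherical (chordal) distance on the Riemann sphere ℂ ∪ {∞},
modeled as `Option ℂ` with `Option.none` playing the role of ∞. -/
def sphDist : Option ℂ → Option ℂ → ℝ
  | Option.some z, Option.some w =>
      2 * ‖z - w‖ /
        (Real.sqrt (1 + ‖z‖ ^ 2) * Real.sqrt (1 + ‖w‖ ^ 2))
  | Option.some z, Option.none => 2 / Real.sqrt (1 + ‖z‖ ^ 2)
  | Option.none, Option.some w => 2 / Real.sqrt (1 + ‖w‖ ^ 2)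
  | Option.none, Option.none => 0

/-- The sequence of iterates `n ↦ f^[k n]` converges locally uniformly on `U`
(with respect to the spherical metric) to the limit function `φ : ℂ → ℂ ∪ {∞}`. -/
def ConvLocUnifOn (f : ℂ → ℂ) (k : ℕ → ℕ) (U : Set ℂ) (φ : ℂ → Option ℂ) : Prop :=
  ∀ K : Set ℂ, K ⊆ U → IsCompact K → ∀ ε > (0 : ℝ), ∃ N : ℕ, ∀ n ≥ N, ∀ z ∈ K,
    sphDist (Option.some (f^[k n] z)) (φ z) < ε

/-- The family of iterates of `f` is normal on `U`: every sequence of iterates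
has a subsequence converging locally uniformly on `U` with respect to the
spherical metric on the Riemann sphere. -/
def NormalOn (f : ℂ → ℂ) (U : Set ℂ) : Prop :=
  ∀ k : ℕ → ℕ, ∃ s : ℕ → ℕ, StrictMono s ∧ ∃ φ : ℂ → Option ℂ,
    ConvLocUnifOn f (k ∘ s) U φ

/-- The Fatou set of `f`: points with an open neighborhood on which the
family of iterates of `f` is normal. -/
def FatouSet (f : ℂ → ℂ) : Set ℂ :=
  {z | ∃ U : Set ℂ, IsOpen U ∧ z ∈ U ∧ NormalOn f U}

/-- The Julia set of `f`: the complement of the Fatou set. -/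
def JuliaSet (f : ℂ → ℂ) : Set ℂ := (FatouSet f)ᶜ

/-- `U` is a Fatou component of `f`: a connected component of the Fatou set. -/
def FatouComponent (f : ℂ → ℂ) (U : Set ℂ) : Prop :=
  ∃ z ∈ FatouSet f, U = connectedComponentIn (FatouSet f) z

/-- `U` is a wandering domain of `f`: a Fatou component such that the Fatou
components `U_n` containing `f^[n] '' U`, `n ≥ 0`, are pairwise distinct. -/
def WanderingDomain (f : ℂ → ℂ) (U : Set ℂ) : Prop :=
  FatouComponent f U ∧
  ∃ comp : ℕ → Set ℂ,
    (∀ n : ℕ, FatouComponent f (comp n) ∧ f^[n] '' U ⊆ comp n) ∧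
    Function.Injective comp

/-- A multiply connected wandering domain: a wandering domain that is not
simply connected. -/
def MCWanderingDomain (f : ℂ → ℂ) (U : Set ℂ) : Prop :=
  WanderingDomain f U ∧ ¬ SimplyConnectedSpace U

/-- The maximum modulus `M(r, f)` of `f` on the circle of radius `r`. -/
def maxMod (f : ℂ → ℂ) (r : ℝ) : ℝ :=
  sSup ((fun z => ‖f z‖) '' Metric.sphere (0 : ℂ) r)

/-- The fast escaping set `A(f)`. -/
def fastEscaping (f : ℂ → ℂ) : Set ℂ :=
  {z | ∃ R > (0 : ℝ), (∀ r ≥ R, r < maxMod f r) ∧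
    ∃ L : ℕ, ∀ n : ℕ, L < n → maxMod (f^[n - L]) R < ‖f^[n] z‖}

/-- The open annulus `A(r, R) = {z : r < |z| < R}`. -/
def ann (r R : ℝ) : Set ℂ := {z : ℂ | r < ‖z‖ ∧ ‖z‖ < R}

/-- An exceptional point of `f`: a point with finite backward orbit. -/
def ExceptionalPoint (f : ℂ → ℂ) (z : ℂ) : Prop :=
  Set.Finite {w : ℂ | ∃ n : ℕ, f^[n] w = z}

/-- `F*(f)`: the union of those Fatou components of `f` that are *not*
simply connected wandering domains contained in the fast escaping set. -/
def FatouStar (f : ℂ → ℂ) : Set ℂ :=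
  ⋃₀ {U : Set ℂ | FatouComponent f U ∧
    ¬ (WanderingDomain f U ∧ SimplyConnectedSpace U ∧ U ⊆ fastEscaping f)}

/-- A piecewise smooth closed curve in the annulus `A(r, R)` with winding number
`n ≠ 0` about `0` has hyperbolic length at least `2π²|n| / log(R/r)`. -/
theorem hyperbolic_length_closed_curve_in_annulus
    (r R : ℝ) (hr : 0 < r) (hrR : r < R)
    (γ : ℝ → ℂ) (n : ℤ) (hn : n ≠ 0)
    (hcont : ContinuousOn γ (Set.Icc 0 1))
    (hpiecewise : ∃ s : Finset ℝ, ∀ t ∈ Set.Icc (0 : ℝ) 1 \ (s : Set ℝ),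
      DifferentiableAt ℝ γ t)
    (hclosed : γ 0 = γ 1)
    (hmem : ∀ t ∈ Set.Icc (0 : ℝ) 1, γ t ∈ ann r R)
    (hwind : (2 * Real.pi * Complex.I)⁻¹ *
      (∫ t in (0 : ℝ)..1, deriv γ t / γ t) = (n : ℂ)) :
    2 * Real.pi ^ 2 * |(n : ℝ)| / Real.log (R / r) ≤
      ∫ t in (0 : ℝ)..1,
        (Real.pi / Real.log (R / r)) *
          (‖γ t‖ *
            Real.sin (Real.pi * Real.log (‖γ t‖ / r) /
              Real.log (R / r)))⁻¹ *
          ‖deriv γ t‖ := by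

  have hR0 : (0:ℝ) < R := hr.trans hrR
  set L := Real.log (R / r) with hLdef
  have hL0 : 0 < L := Real.log_pos (by rw [lt_div_iff₀ hr]; linarith)
  have habs : ∀ t ∈ Set.Icc (0:ℝ) 1, r < ‖γ t‖ ∧ ‖γ t‖ < R :=
    fun t ht => hmem t ht
  -- integrability of γ'/γ
  have h_int : IntervalIntegrable (fun t => deriv γ t / γ t) MeasureTheory.volume 0 1 := by
    by_contra h
    rw [intervalIntegral.integral_undef h, mul_zero] at hwind
    exact hn (by exact_mod_cast hwind.symm)
  have h2πi : (2 * (Real.pi:ℂ) * Complex.I) ≠ 0 := by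
    simp [Real.pi_ne_zero, Complex.I_ne_zero, Complex.ofReal_ne_zero]
  have hval : (∫ t in (0:ℝ)..1, deriv γ t / γ t) = 2 * Real.pi * Complex.I * n := by
    rw [inv_mul_eq_iff_eq_mul₀ h2πi] at hwind
    exact hwind
  -- lower bound for the integral of the norm
  have hnorm : 2 * Real.pi * |(n:ℝ)| ≤ ∫ t in (0:ℝ)..1, ‖deriv γ t / γ t‖ := by
    have h1 := intervalIntegral.norm_integral_le_integral_norm
      (f := fun t => deriv γ t / γ t) (μ := MeasureTheory.volume) (zero_le_one)
    rw [hval] at h1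
    have h2 : ‖(2 * (Real.pi:ℂ) * Complex.I * n)‖ = 2 * Real.pi * |(n:ℝ)| := by
      simp only [norm_mul, Complex.norm_I, Complex.norm_real,
        Complex.norm_intCast, Complex.norm_two, Real.norm_eq_abs, abs_of_pos Real.pi_pos]
      push_cast
      ring
    rw [h2] at h1
    simpa using h1
  -- the sine factor
  set φ : ℝ → ℝ := fun t => Real.sin (Real.pi * Real.log (‖γ t‖ / r) / L)
    with hφdef
  have hφcont : ContinuousOn φ (Set.Icc 0 1) := by
    apply Real.continuous_sin.comp_continuousOn
    apply ContinuousOn.div_const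
    apply ContinuousOn.mul continuousOn_const
    apply ContinuousOn.log
    · exact (continuous_norm.comp_continuousOn hcont).div_const r
    · intro t ht
      have h0 : 0 < ‖γ t‖ := hr.trans (habs t ht).1
      positivity
  have hφpos : ∀ t ∈ Set.Icc (0:ℝ) 1, 0 < φ t := by
    intro t ht
    obtain ⟨h1, h2⟩ := habs t ht
    have ha0 : 0 < ‖γ t‖ := hr.trans h1
    have hl1 : 0 < Real.log (‖γ t‖ / r) :=
      Real.log_pos (by rw [lt_div_iff₀ hr]; linarith)
    have hl2 : Real.log (‖γ t‖ / r) < L := by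
      apply Real.log_lt_log (by positivity)
      gcongr
    apply Real.sin_pos_of_pos_of_lt_pi
    · positivity
    · rw [div_lt_iff₀ hL0]
      nlinarith [Real.pi_pos]
  have hφle : ∀ t ∈ Set.Icc (0:ℝ) 1, φ t ≤ 1 := fun t _ => Real.sin_le_one _
  -- uniform lower bound for φ
  obtain ⟨t₀, ht₀, hmin⟩ := isCompact_Icc.exists_isMinOn
    (Set.nonempty_Icc.mpr zero_le_one) hφcont
  set c := φ t₀ with hc
  have hc0 : 0 < c := hφpos t₀ ht₀
  have hcle : ∀ t ∈ Set.Icc (0:ℝ) 1, c ≤ φ t := fun t ht => hmin ht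
  -- abbreviation for the integrand
  set g : ℝ → ℝ := fun t =>
    Real.pi / L * (‖γ t‖ * φ t)⁻¹ * ‖deriv γ t‖ with hg
  -- integrability of g
  have hdom : IntervalIntegrable
      (fun t => Real.pi / (L * c) * ‖deriv γ t / γ t‖)
      MeasureTheory.volume 0 1 := by
    simpa using h_int.norm.const_mul (Real.pi / (L * c))
  have hg_int : IntervalIntegrable g MeasureTheory.volume 0 1 := by
    apply hdom.mono_fun
    · -- measurability
      rw [Set.uIoc_of_le zero_le_one]
      apply MeasureTheory.AEStronglyMeasurable.mul
      apply MeasureTheory.AEStronglyMeasurable.mul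
      · exact MeasureTheory.aestronglyMeasurable_const
      · apply ContinuousOn.aestronglyMeasurable _ measurableSet_Ioc
        apply ContinuousOn.inv₀
        · exact ((continuous_norm.comp_continuousOn
            (hcont.mono Set.Ioc_subset_Icc_self)).mul
            (hφcont.mono Set.Ioc_subset_Icc_self))
        · intro t ht
          have h1 : 0 < ‖γ t‖ :=
            hr.trans (habs t (Set.Ioc_subset_Icc_self ht)).1
          have h2 := hφpos t (Set.Ioc_subset_Icc_self ht)
          positivity
      · exact ((measurable_deriv γ).norm.aestronglyMeasurable :
          MeasureTheory.AEStronglyMeasurable (fun t => ‖deriv γ t‖) _)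
    · -- a.e. bound
      rw [Set.uIoc_of_le zero_le_one, Filter.EventuallyLE,
        MeasureTheory.ae_restrict_iff' measurableSet_Ioc]
      filter_upwards with t ht
      have ht' : t ∈ Set.Icc (0:ℝ) 1 := Set.Ioc_subset_Icc_self ht
      obtain ⟨h1, _⟩ := habs t ht'
      have ha0 : 0 < ‖γ t‖ := hr.trans h1
      have hφt := hφpos t ht'
      have hct := hcle t ht'
      have hgnn : 0 ≤ g t := by
        rw [hg]
        positivity
      rw [Real.norm_of_nonneg hgnn, Real.norm_of_nonneg (by positivity)]
      rw [hg, norm_div]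
      rw [div_eq_mul_inv (‖deriv γ t‖)]
      have key : Real.pi / L * (‖γ t‖ * φ t)⁻¹ ≤
          Real.pi / (L * c) * (‖γ t‖)⁻¹ := by
        rw [← div_eq_mul_inv, div_div, ← div_eq_mul_inv, div_div]
        apply div_le_div_of_nonneg_left Real.pi_pos.le (by positivity)
        have hh := mul_le_mul_of_nonneg_left hct (mul_pos hL0 ha0).le
        nlinarith [hh]
      calc Real.pi / L * (‖γ t‖ * φ t)⁻¹ * ‖deriv γ t‖
          ≤ Real.pi / (L * c) * (‖γ t‖)⁻¹ * ‖deriv γ t‖ := by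
            gcongr
        _ = Real.pi / (L * c) * (‖deriv γ t‖ * (‖γ t‖)⁻¹) := by
            ring
  -- pointwise comparison and conclusion
  have hmono : (∫ t in (0:ℝ)..1, Real.pi / L * ‖deriv γ t / γ t‖)
      ≤ ∫ t in (0:ℝ)..1, g t := by
    apply intervalIntegral.integral_mono_on zero_le_one
      (by simpa using h_int.norm.const_mul (Real.pi / L)) hg_int
    intro t ht
    obtain ⟨h1, _⟩ := habs t ht
    have ha0 : 0 < ‖γ t‖ := hr.trans h1
    have hφt := hφpos t ht
    have hφ1 := hφle t ht
    rw [hg, norm_div, div_eq_mul_inv (‖deriv γ t‖)]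
    have key : (‖γ t‖)⁻¹ ≤ (‖γ t‖ * φ t)⁻¹ := by
      apply inv_anti₀ (by positivity)
      nlinarith
    calc Real.pi / L * (‖deriv γ t‖ * (‖γ t‖)⁻¹)
        = Real.pi / L * (‖γ t‖)⁻¹ * ‖deriv γ t‖ := by ring
      _ ≤ Real.pi / L * (‖γ t‖ * φ t)⁻¹ * ‖deriv γ t‖ := by
          gcongr
  have hconst : (∫ t in (0:ℝ)..1, Real.pi / L * ‖deriv γ t / γ t‖)
      = Real.pi / L * ∫ t in (0:ℝ)..1, ‖deriv γ t / γ t‖ :=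
    intervalIntegral.integral_const_mul _ _
  have hfinal : 2 * Real.pi ^ 2 * |(n:ℝ)| / L ≤ ∫ t in (0:ℝ)..1, g t := by
    calc 2 * Real.pi ^ 2 * |(n:ℝ)| / L
        = Real.pi / L * (2 * Real.pi * |(n:ℝ)|) := by ring
      _ ≤ Real.pi / L * ∫ t in (0:ℝ)..1, ‖deriv γ t / γ t‖ := by
          gcongr
      _ = ∫ t in (0:ℝ)..1, Real.pi / L * ‖deriv γ t / γ t‖ := hconst.symm
      _ ≤ ∫ t in (0:ℝ)..1, g t := hmono
  exact hfinal
end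
end

section
/- Let f and g be permutable transcendental entire functions. Then g(J(f)) ⊆ J(f), i.e., the image of the Julia set of f under g is contained in the Julia set of f. -/
open Set Function

noncomputable section

namespace JuliaAux


lemma sphDist_ss (z w : ℂ) : sphDist (Option.some z) (Option.some w)
    = 2 * norm (z - w) /
        (Real.sqrt (1 + norm z ^ 2) * Real.sqrt (1 + norm w ^ 2)) := rfl
lemma sphDist_sn (z : ℂ) : sphDist (Option.some z) Option.none
    = 2 / Real.sqrt (1 + norm z ^ 2) := rfl
lemma sphDist_ns (w : ℂ) : sphDist Option.none (Option.some w)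
    = 2 / Real.sqrt (1 + norm w ^ 2) := rfl
lemma sphDist_nn : sphDist Option.none Option.none = 0 := rfl

lemma one_add_sq_pos (z : ℂ) : (0:ℝ) < 1 + norm z ^ 2 := by positivity

lemma sqrt_pos' (z : ℂ) : (0:ℝ) < Real.sqrt (1 + norm z ^ 2) :=
  Real.sqrt_pos.mpr (one_add_sq_pos z)

lemma one_le_sqrt' (z : ℂ) : (1:ℝ) ≤ Real.sqrt (1 + norm z ^ 2) := by
  have := Real.sqrt_le_sqrt (show (1:ℝ) ≤ 1 + norm z ^ 2 by
    nlinarith [sq_nonneg (norm z)])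
  simpa using this

def sphInv : Option ℂ → Option ℂ
  | Option.some z => if z = 0 then Option.none else Option.some z⁻¹
  | Option.none => Option.some 0

def sphTr (b : ℂ) : Option ℂ → Option ℂ
  | Option.some z => Option.some (z + b)
  | Option.none => Option.none

def sphMob (b : ℂ) (x : Option ℂ) : Option ℂ := sphTr b (sphInv x)

lemma sphInv_some (z : ℂ) (hz : z ≠ 0) : sphInv (Option.some z) = Option.some z⁻¹ := by
  simp [sphInv, hz]
lemma sphInv_zero : sphInv (Option.some 0) = Option.none := by simp [sphInv]
lemma sphInv_none : sphInv Option.none = Option.some 0 := rfl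
lemma sphTr_some (b z : ℂ) : sphTr b (Option.some z) = Option.some (z + b) := rfl
lemma sphTr_none (b : ℂ) : sphTr b Option.none = Option.none := rfl

lemma sqrt_inv_eq (z : ℂ) (hz : z ≠ 0) :
    Real.sqrt (1 + norm z⁻¹ ^ 2)
      = Real.sqrt (1 + norm z ^ 2) / norm z := by
  have haz : (0:ℝ) < norm z := by
    simpa [norm_pos_iff] using hz
  rw [norm_inv]
  rw [show (1 + (norm z)⁻¹ ^ 2) = (1 + norm z ^ 2) / norm z ^ 2 by
    field_simp; ring]
  rw [Real.sqrt_div (by positivity), Real.sqrt_sq haz.le]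

lemma abs0 : norm (0:ℂ) ^ 2 = 0 := by simp

lemma sphInv_isometry (x y : Option ℂ) : sphDist (sphInv x) (sphInv y) = sphDist x y := by
  have key : ∀ w : ℂ, w ≠ 0 →
      sphDist (Option.some 0) (Option.some w⁻¹) = sphDist Option.none (Option.some w) := by
    intro w hw
    have haw : (0:ℝ) < norm w := by simpa [norm_pos_iff] using hw
    rw [sphDist_ss, sphDist_ns, sqrt_inv_eq w hw, zero_sub, norm_neg, norm_inv, abs0]
    rw [show (1:ℝ) + 0 = 1 by ring, Real.sqrt_one]
    field_simp
  have key2 : ∀ w : ℂ, w ≠ 0 →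
      sphDist Option.none (Option.some w⁻¹) = sphDist (Option.some 0) (Option.some w) := by
    intro w hw
    have haw : (0:ℝ) < norm w := by simpa [norm_pos_iff] using hw
    rw [sphDist_ns, sphDist_ss, sqrt_inv_eq w hw, zero_sub, norm_neg, abs0]
    rw [show (1:ℝ) + 0 = 1 by ring, Real.sqrt_one]
    field_simp
  rcases x with _ | z <;> rcases y with _ | w
  · simp [sphInv_none, sphDist_ss, sphDist_nn]
  · by_cases hw : w = 0
    · subst hw; rw [sphInv_none, sphInv_zero, sphDist_sn, sphDist_ns, abs0]
    · rw [sphInv_none, sphInv_some w hw, key w hw]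
  · by_cases hz : z = 0
    · subst hz; rw [sphInv_none, sphInv_zero, sphDist_ns, sphDist_sn, abs0]
    · rw [sphInv_none, sphInv_some z hz, sphDist_ss, sphDist_sn, sqrt_inv_eq z hz,
        sub_zero, norm_inv, abs0]
      rw [show (1:ℝ) + 0 = 1 by ring, Real.sqrt_one]
      have haz : (0:ℝ) < norm z := by simpa [norm_pos_iff] using hz
      field_simp
  · by_cases hz : z = 0 <;> by_cases hw : w = 0
    · subst hz; subst hw; rw [sphInv_zero, sphDist_nn, sphDist_ss]; simp
    · subst hz
      rw [sphInv_zero, sphInv_some w hw]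
      rw [key2 w hw]
    · subst hw
      rw [sphInv_zero, sphInv_some z hz]
      have : sphDist (Option.some z⁻¹) Option.none = sphDist Option.none (Option.some z⁻¹) := by
        rw [sphDist_sn, sphDist_ns]
      rw [this, key2 z hz, sphDist_ss, sphDist_ss, sub_zero, zero_sub, norm_neg]
      ring
    · have haz : (0:ℝ) < norm z := by simpa [norm_pos_iff] using hz
      have haw : (0:ℝ) < norm w := by simpa [norm_pos_iff] using hw
      rw [sphInv_some z hz, sphInv_some w hw, sphDist_ss, sphDist_ss,
        sqrt_inv_eq z hz, sqrt_inv_eq w hw,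
        show z⁻¹ - w⁻¹ = (w - z) / (z * w) by field_simp,
        norm_div, norm_mul, norm_sub_rev w z]
      have h1 := sqrt_pos' z
      have h2 := sqrt_pos' w
      field_simp



lemma fac2 (x b : ℂ) : Real.sqrt (1 + norm x ^ 2)
    ≤ (2*(1 + norm b ^ 2)) * Real.sqrt (1 + norm (x + b) ^ 2) := by
  set c : ℝ := 2*(1 + norm b ^ 2) with hc
  have hc1 : (1:ℝ) ≤ c := by
    have := sq_nonneg (norm b); simp only [hc]; nlinarith
  have hc0 : (0:ℝ) ≤ c := by linarith
  have htri : norm x ≤ norm (x + b) + norm b := by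
    calc norm x = norm ((x + b) + (-b)) := by ring_nf
    _ ≤ norm (x + b) + norm (-b) := norm_add_le _ _
    _ = norm (x + b) + norm b := by rw [norm_neg]
  have h1 : Real.sqrt (1 + norm x ^ 2)
      ≤ Real.sqrt (c * (1 + norm (x+b) ^ 2)) := by
    apply Real.sqrt_le_sqrt
    simp only [hc]
    nlinarith [sq_nonneg (norm (x+b) - norm b), norm_nonneg x,
      norm_nonneg (x+b), norm_nonneg b, sq_nonneg (norm (x+b)),
      sq_nonneg (norm b), sq_nonneg (norm (x+b) * norm b)]
  have h2 : Real.sqrt (c * (1 + norm (x+b) ^ 2))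
      = Real.sqrt c * Real.sqrt (1 + norm (x+b) ^ 2) := Real.sqrt_mul hc0 _
  have h3 : Real.sqrt c ≤ c := by
    calc Real.sqrt c ≤ Real.sqrt (c^2) := Real.sqrt_le_sqrt (by nlinarith)
    _ = c := Real.sqrt_sq hc0
  calc Real.sqrt (1 + norm x ^ 2) ≤ Real.sqrt c * Real.sqrt (1 + norm (x+b) ^ 2) := by
        rw [← h2]; exact h1
  _ ≤ c * Real.sqrt (1 + norm (x+b) ^ 2) :=
        mul_le_mul_of_nonneg_right h3 (Real.sqrt_nonneg _)

lemma sphTr_lipschitz (b : ℂ) (x y : Option ℂ) :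
    sphDist (sphTr b x) (sphTr b y) ≤ (2*(1 + norm b ^ 2))^2 * sphDist x y := by
  set c : ℝ := 2*(1 + norm b ^ 2) with hc
  have hc1 : (1:ℝ) ≤ c := by
    have := sq_nonneg (norm b); simp only [hc]; nlinarith
  rcases x with _ | z <;> rcases y with _ | w
  · rw [sphTr_none, sphDist_nn]; simp
  · rw [sphTr_none, sphTr_some, sphDist_ns, sphDist_ns]
    have h := fac2 w b
    rw [← hc] at h
    have h2 := sqrt_pos' (w + b)
    have h3 : 0 ≤ c * (c - 1) * Real.sqrt (1 + norm (w+b)^2) :=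
      mul_nonneg (mul_nonneg (by linarith) (by linarith)) h2.le
    rw [mul_div_assoc', div_le_div_iff₀ (sqrt_pos' _) (sqrt_pos' w)]
    nlinarith [h, h3, h2.le, hc1]
  · rw [sphTr_none, sphTr_some, sphDist_sn, sphDist_sn]
    have h := fac2 z b
    rw [← hc] at h
    have h2 := sqrt_pos' (z + b)
    have h3 : 0 ≤ c * (c - 1) * Real.sqrt (1 + norm (z+b)^2) :=
      mul_nonneg (mul_nonneg (by linarith) (by linarith)) h2.le
    rw [mul_div_assoc', div_le_div_iff₀ (sqrt_pos' _) (sqrt_pos' z)]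
    nlinarith [h, h3, h2.le, hc1]
  · rw [sphTr_some, sphTr_some, sphDist_ss, sphDist_ss,
      show (z + b) - (w + b) = z - w by ring]
    have hA := fac2 z b
    have hB := fac2 w b
    have hA' := sqrt_pos' (z+b)
    have hB' := sqrt_pos' (w+b)
    have hA0 := sqrt_pos' z
    have hB0 := sqrt_pos' w
    have ht : (0:ℝ) ≤ norm (z - w) := norm_nonneg _
    rw [mul_div_assoc'] at *
    rw [div_le_div_iff₀ (by positivity) (by positivity)]
    have hAB : Real.sqrt (1 + norm z ^ 2) * Real.sqrt (1 + norm w ^ 2)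
        ≤ (c * Real.sqrt (1 + norm (z+b) ^ 2)) * (c * Real.sqrt (1 + norm (w+b) ^ 2)) :=
      mul_le_mul hA hB (Real.sqrt_nonneg _) (by positivity)
    nlinarith [hAB]

lemma sphMob_lipschitz (b : ℂ) (x y : Option ℂ) :
    sphDist (sphMob b x) (sphMob b y) ≤ (2*(1 + norm b ^ 2))^2 * sphDist x y := by
  calc sphDist (sphMob b x) (sphMob b y) ≤ (2*(1 + norm b ^ 2))^2 * sphDist (sphInv x) (sphInv y) :=
        sphTr_lipschitz b _ _
  _ = (2*(1 + norm b ^ 2))^2 * sphDist x y := by rw [sphInv_isometry]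



def P : Option ℂ → EuclideanSpace ℝ (Fin 3)
  | Option.some z => WithLp.toLp 2 ![2 * z.re / (1 + norm z ^ 2), 2 * z.im / (1 + norm z ^ 2),
      (norm z ^ 2 - 1) / (1 + norm z ^ 2)]
  | Option.none => WithLp.toLp 2 ![0, 0, 1]

lemma abs_sq_eq (z : ℂ) : norm z ^ 2 = z.re ^ 2 + z.im ^ 2 := by
  rw [Complex.sq_norm, Complex.normSq_apply]; ring

lemma sq_eq_sqrt_helper {s S : ℝ} (h : 0 ≤ s) (h2 : s ^ 2 = S) : Real.sqrt S = s := by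
  rw [← h2]; exact Real.sqrt_sq h

lemma sphDist_nonneg (x y : Option ℂ) : 0 ≤ sphDist x y := by
  rcases x with _ | z <;> rcases y with _ | w <;> simp [sphDist] <;> positivity


lemma sphDist_eq (x y : Option ℂ) : sphDist x y = dist (P x) (P y) := by
  have sq3 : ∀ u v : EuclideanSpace ℝ (Fin 3), dist u v
      = Real.sqrt ((u 0 - v 0)^2 + ((u 1 - v 1)^2 + ((u 2 - v 2)^2 + 0))) := by
    intro u v
    rw [EuclideanSpace.dist_eq]
    congr 1
    rw [Fin.sum_univ_three]
    simp [Real.dist_eq, sq_abs]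
    ring
  rcases x with _ | z <;> rcases y with _ | w
  · simp [sphDist, P, dist_self]
  · have hM : (0:ℝ) < 1 + norm w ^ 2 := by positivity
    rw [sq3]
    refine (sq_eq_sqrt_helper (sphDist_nonneg _ _) ?_).symm
    show (2 / Real.sqrt (1 + norm w ^ 2)) ^ 2 = _
    rw [div_pow, Real.sq_sqrt hM.le]
    simp only [P, Matrix.cons_val_zero, Matrix.cons_val_one, Matrix.head_cons]
    show (2:ℝ)^2 / (1 + norm w ^ 2) = (0 - 2 * w.re / (1 + norm w ^ 2))^2
      + ((0 - 2 * w.im / (1 + norm w ^ 2))^2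
      + ((1 - (norm w ^ 2 - 1) / (1 + norm w ^ 2))^2 + 0))
    rw [abs_sq_eq] at hM ⊢
    field_simp
    ring
  · have hM : (0:ℝ) < 1 + norm z ^ 2 := by positivity
    rw [sq3]
    refine (sq_eq_sqrt_helper (sphDist_nonneg _ _) ?_).symm
    show (2 / Real.sqrt (1 + norm z ^ 2)) ^ 2 = _
    rw [div_pow, Real.sq_sqrt hM.le]
    simp only [P, Matrix.cons_val_zero, Matrix.cons_val_one, Matrix.head_cons]
    show (2:ℝ)^2 / (1 + norm z ^ 2) = (2 * z.re / (1 + norm z ^ 2) - 0)^2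
      + ((2 * z.im / (1 + norm z ^ 2) - 0)^2
      + (((norm z ^ 2 - 1) / (1 + norm z ^ 2) - 1)^2 + 0))
    rw [abs_sq_eq] at hM ⊢
    field_simp
    ring
  · have hN : (0:ℝ) < 1 + norm z ^ 2 := by positivity
    have hM : (0:ℝ) < 1 + norm w ^ 2 := by positivity
    rw [sq3]
    refine (sq_eq_sqrt_helper (sphDist_nonneg _ _) ?_).symm
    show (2 * norm (z - w) / (Real.sqrt (1 + norm z ^ 2)
      * Real.sqrt (1 + norm w ^ 2))) ^ 2 = _
    rw [div_pow, mul_pow (Real.sqrt _), Real.sq_sqrt hN.le, Real.sq_sqrt hM.le, mul_pow]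
    simp only [P, Matrix.cons_val_zero, Matrix.cons_val_one, Matrix.head_cons]
    show (2:ℝ)^2 * norm (z - w) ^ 2 / ((1 + norm z ^ 2) * (1 + norm w ^ 2))
      = (2 * z.re / (1 + norm z ^ 2) - 2 * w.re / (1 + norm w ^ 2))^2
      + ((2 * z.im / (1 + norm z ^ 2) - 2 * w.im / (1 + norm w ^ 2))^2
      + (((norm z ^ 2 - 1) / (1 + norm z ^ 2)
          - (norm w ^ 2 - 1) / (1 + norm w ^ 2))^2 + 0))
    rw [abs_sq_eq] at hN hM ⊢
    rw [abs_sq_eq, abs_sq_eq, Complex.sub_re, Complex.sub_im]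
    field_simp
    ring


open Filter in
lemma sphDist_comm (x y : Option ℂ) : sphDist x y = sphDist y x := by
  rw [sphDist_eq, sphDist_eq, dist_comm]

lemma sphDist_triangle (x y z : Option ℂ) : sphDist x z ≤ sphDist x y + sphDist y z := by
  rw [sphDist_eq, sphDist_eq, sphDist_eq]; exact dist_triangle _ _ _

lemma sphDist_some_le (a b : ℂ) : sphDist (Option.some a) (Option.some b)
    ≤ 2 * norm (a - b) := by
  rw [sphDist_ss]
  apply div_le_self (by positivity)
  nlinarith [one_le_sqrt' a, one_le_sqrt' b, Real.sqrt_nonneg (1 + norm a ^ 2)]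

lemma abs_lt_of_sphDist_lt {ζ : ℂ} {M : ℝ} (hM : 0 ≤ M)
    (h : sphDist (Option.some ζ) Option.none < 2 / Real.sqrt (1 + M^2)) :
    M < norm ζ := by
  rw [sphDist_sn] at h
  by_contra hle
  push_neg at hle
  have h1 : (1:ℝ) + norm ζ ^ 2 ≤ 1 + M ^ 2 := by
    nlinarith [norm_nonneg ζ]
  have h2 : Real.sqrt (1 + norm ζ ^ 2) ≤ Real.sqrt (1 + M ^ 2) := Real.sqrt_le_sqrt h1
  have h3 : (0:ℝ) < Real.sqrt (1 + M ^ 2) := by positivity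
  have h4 : 2 / Real.sqrt (1 + M ^ 2) ≤ 2 / Real.sqrt (1 + norm ζ ^ 2) :=
    div_le_div_of_nonneg_left (by norm_num) (sqrt_pos' ζ) h2
  linarith

lemma abs_le_of_sphDist_ge {ζ : ℂ} {c : ℝ} (hc : 0 < c)
    (h : c ≤ sphDist (Option.some ζ) Option.none) : norm ζ ≤ 2 / c := by
  rw [sphDist_sn] at h
  have h1 : c * Real.sqrt (1 + norm ζ ^ 2) ≤ 2 := (le_div_iff₀ (sqrt_pos' ζ)).mp h
  have h2 : Real.sqrt (1 + norm ζ ^ 2) ≤ 2 / c := by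
    rw [le_div_iff₀ hc]; linarith
  calc norm ζ = Real.sqrt (norm ζ ^ 2) := (Real.sqrt_sq (norm_nonneg ζ)).symm
  _ ≤ Real.sqrt (1 + norm ζ ^ 2) := Real.sqrt_le_sqrt (by linarith)
  _ ≤ 2 / c := h2

/-- uniform spherical convergence on a set -/
def UCP (G : ℕ → ℂ → ℂ) (φ : ℂ → Option ℂ) (S : Set ℂ) : Prop :=
  ∀ ε > (0:ℝ), ∃ N, ∀ n ≥ N, ∀ w ∈ S, sphDist (Option.some (G n w)) (φ w) < ε

lemma UCP.mono {G : ℕ → ℂ → ℂ} {φ : ℂ → Option ℂ} {S T : Set ℂ}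
    (h : UCP G φ S) (hT : T ⊆ S) : UCP G φ T := by
  intro ε hε
  obtain ⟨N, hN⟩ := h ε hε
  exact ⟨N, fun n hn w hw => hN n hn w (hT hw)⟩

lemma UCP_transfer {H : ℕ → ℂ → ℂ} {φ : ℂ → Option ℂ} {S : Set ℂ} {θ σ : ℕ → ℕ} {J : ℕ}
    (h : UCP (fun n => H (θ n)) φ S) (hs : ∀ n, J ≤ n → ∃ m, n ≤ m ∧ σ n = θ m) :
    UCP (fun n => H (σ n)) φ S := by
  intro ε hε
  obtain ⟨N, hN⟩ := h ε hε
  refine ⟨max N J, fun n hn w hw => ?_⟩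
  obtain ⟨m, hm, hEq⟩ := hs n (le_trans (le_max_right _ _) hn)
  show sphDist (Option.some (H (σ n) w)) (φ w) < ε
  rw [hEq]
  exact hN m (le_trans (le_trans (le_max_left _ _) hn) hm) w hw

open Filter in
lemma UCP.tendstoP {G : ℕ → ℂ → ℂ} {φ : ℂ → Option ℂ} {S : Set ℂ}
    (h : UCP G φ S) {w : ℂ} (hw : w ∈ S) :
    Tendsto (fun n => P (Option.some (G n w))) atTop (nhds (P (φ w))) := by
  rw [Metric.tendsto_atTop]
  intro ε hε
  obtain ⟨N, hN⟩ := h ε hε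
  exact ⟨N, fun n hn => by rw [← sphDist_eq]; exact hN n hn w hw⟩

open scoped Classical in
/-- step function for the diagonal construction -/
def dstep (good : ℕ → (ℕ → ℕ) → Prop) (j : ℕ) (θ : ℕ → ℕ) : ℕ → ℕ :=
  if h : ∃ τ : ℕ → ℕ, StrictMono τ ∧ good j (θ ∘ τ) then θ ∘ (Classical.choose h) else θ

def dTheta (good : ℕ → (ℕ → ℕ) → Prop) : ℕ → (ℕ → ℕ)
  | 0 => id
  | (j+1) => dstep good j (dTheta good j)

lemma diagonal_subseq (good : ℕ → (ℕ → ℕ) → Prop) :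
    ∃ σ : ℕ → ℕ, StrictMono σ ∧
      ∀ j, (∀ θ : ℕ → ℕ, StrictMono θ → ∃ τ : ℕ → ℕ, StrictMono τ ∧ good j (θ ∘ τ)) →
        ∃ θ : ℕ → ℕ, StrictMono θ ∧ good j θ ∧ ∀ n, j + 1 ≤ n → ∃ m, n ≤ m ∧ σ n = θ m := by
  classical
  have hmono : ∀ j, StrictMono (dTheta good j) := by
    intro j; induction j with
    | zero => exact strictMono_id
    | succ j ih =>
      show StrictMono (dstep good j (dTheta good j))
      unfold dstep
      split_ifs with h
      · exact ih.comp (Classical.choose_spec h).1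
      · exact ih
  have hrel : ∀ j j', j ≤ j' → ∃ ρ : ℕ → ℕ, (∀ a, a ≤ ρ a) ∧ StrictMono ρ ∧
      dTheta good j' = dTheta good j ∘ ρ := by
    intro j j' hle
    induction j', hle using Nat.le_induction with
    | base => exact ⟨id, fun a => le_rfl, strictMono_id, rfl⟩
    | succ j' hle ih =>
      obtain ⟨ρ, hρ1, hρ2, hρ3⟩ := ih
      show ∃ ρ', _ ∧ _ ∧ dstep good j' (dTheta good j') = dTheta good j ∘ ρ'
      unfold dstep
      split_ifs with h
      · refine ⟨ρ ∘ (Classical.choose h), ?_, hρ2.comp (Classical.choose_spec h).1, ?_⟩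
        · intro a
          exact le_trans (Classical.choose_spec h).1.le_apply (hρ1 _)
        · funext a
          exact congrFun hρ3 (Classical.choose h a)
      · exact ⟨ρ, hρ1, hρ2, hρ3⟩
  set σ : ℕ → ℕ := fun n => dTheta good n n with hσ
  have hσmono : StrictMono σ := by
    apply strictMono_nat_of_lt_succ
    intro n
    obtain ⟨ρ, hρ1, hρ2, hρ3⟩ := hrel n (n+1) (Nat.le_succ n)
    have : σ (n+1) = dTheta good n (ρ (n+1)) := by rw [hσ]; simp [hρ3]
    rw [this]
    calc σ n = dTheta good n n := rfl
    _ < dTheta good n (n+1) := (hmono n) (Nat.lt_succ_self n)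
    _ ≤ dTheta good n (ρ (n+1)) := (hmono n).monotone (hρ1 (n+1))
  refine ⟨σ, hσmono, ?_⟩
  intro j hj
  have hex : ∃ τ : ℕ → ℕ, StrictMono τ ∧ good j (dTheta good j ∘ τ) := hj _ (hmono j)
  refine ⟨dTheta good (j+1), hmono (j+1), ?_, ?_⟩
  · show good j (dstep good j (dTheta good j))
    unfold dstep
    rw [dif_pos hex]
    exact (Classical.choose_spec hex).2
  · intro n hn
    obtain ⟨ρ, hρ1, hρ2, hρ3⟩ := hrel (j+1) n hn
    exact ⟨ρ n, hρ1 n, by rw [hσ]; simp [hρ3]⟩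

open Filter in
lemma tendsto_transfer {X : Type*} [PseudoMetricSpace X] {x : ℕ → X} {l : X}
    (h : Tendsto x atTop (nhds l)) {y : ℕ → X} {J : ℕ}
    (hy : ∀ n, J ≤ n → ∃ m, n ≤ m ∧ y n = x m) : Tendsto y atTop (nhds l) := by
  rw [Metric.tendsto_atTop] at h ⊢
  intro ε hε
  obtain ⟨N, hN⟩ := h ε hε
  refine ⟨max N J, fun n hn => ?_⟩
  obtain ⟨m, hm, hEq⟩ := hy n (le_trans (le_max_right _ _) hn)
  rw [hEq]
  exact hN m (le_trans (le_trans (le_max_left _ _) hn) hm)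


open Filter Metric in
lemma montel (v : ℕ → ℂ → ℂ) (c : ℂ) (R C : ℝ) (hR : 0 < R)
    (hd : ∀ n, DifferentiableOn ℂ (v n) (Metric.ball c R))
    (hb : ∀ n, ∀ w ∈ Metric.ball c R, norm (v n w) ≤ C) :
    ∃ τ : ℕ → ℕ, StrictMono τ ∧ ∃ u : ℂ → ℂ,
      ∀ ε > (0:ℝ), ∃ N, ∀ n ≥ N, ∀ x ∈ Metric.closedBall c (R/4),
        norm (v (τ n) x - u x) < ε := by
  classical
  have hC0 : (0:ℝ) ≤ C := le_trans (norm_nonneg _) (hb 0 c (mem_ball_self hR))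
  set L : ℝ := (2*C+1)/(R/4) with hL
  have hL0 : 0 < L := by positivity
  -- Lipschitz estimate from the Schwarz lemma
  have hlip : ∀ n, ∀ x ∈ closedBall c (R/2), ∀ y ∈ ball x (R/4),
      norm (v n y - v n x) ≤ L * norm (y - x) := by
    intro n x hx y hy
    rw [mem_closedBall] at hx
    have hsub : ball x (R/4) ⊆ ball c R := by
      intro ξ hξ
      rw [mem_ball] at hξ ⊢
      calc dist ξ c ≤ dist ξ x + dist x c := dist_triangle _ _ _
      _ < R/4 + R/2 := by linarith
      _ < R := by linarith
    have hxc : x ∈ ball c R := by rw [mem_ball]; linarith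
    have hd' : DifferentiableOn ℂ (v n) (ball x (R/4)) := (hd n).mono hsub
    have hmaps : Set.MapsTo (v n) (ball x (R/4)) (ball (v n x) (2*C+1)) := by
      intro ξ hξ
      rw [mem_ball, Complex.dist_eq]
      calc norm (v n ξ - v n x) ≤ norm (v n ξ) + norm (v n x) := by
            calc norm (v n ξ - v n x) = norm (v n ξ + -(v n x)) := by ring_nf
            _ ≤ norm (v n ξ) + norm (-(v n x)) := norm_add_le _ _
            _ = norm (v n ξ) + norm (v n x) := by rw [norm_neg]
      _ ≤ C + C := add_le_add (hb n ξ (hsub hξ)) (hb n x hxc)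
      _ < 2*C+1 := by linarith
    have := Complex.dist_le_div_mul_dist_of_mapsTo_ball hd' (hmaps.mono_right ball_subset_closedBall) hy
    rw [Complex.dist_eq, Complex.dist_eq] at this
    exact this
  obtain ⟨d, hdense⟩ := TopologicalSpace.exists_dense_seq ℂ
  set good : ℕ → (ℕ → ℕ) → Prop := fun i σ =>
    ∃ l, Tendsto (fun n => v (σ n) (d i)) atTop (nhds l) with hgood_def
  obtain ⟨σ', hσ'mono, hσ'⟩ := diagonal_subseq good
  have hgood : ∀ i, d i ∈ ball c R →
      ∀ θ : ℕ → ℕ, StrictMono θ → ∃ τ, StrictMono τ ∧ good i (θ ∘ τ) := by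
    intro i hi θ _
    have hmem : ∀ n, v (θ n) (d i) ∈ closedBall (0:ℂ) C := by
      intro n
      rw [mem_closedBall_zero_iff]
      exact hb (θ n) (d i) hi
    obtain ⟨a, _, τ, hτ, hconv⟩ := (isCompact_closedBall (0:ℂ) C).tendsto_subseq hmem
    exact ⟨τ, hτ, a, hconv⟩
  have hptconv : ∀ i, d i ∈ ball c R →
      ∃ l, Tendsto (fun n => v (σ' n) (d i)) atTop (nhds l) := by
    intro i hi
    obtain ⟨θ, hθm, hg, htail⟩ := hσ' i (hgood i hi)
    obtain ⟨l, hl⟩ := hg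
    exact ⟨l, tendsto_transfer hl (fun n hn => (htail n hn).imp
      fun m hm => ⟨hm.1, by rw [hm.2]⟩)⟩
  have hUC : ∀ ε > (0:ℝ), ∃ N, ∀ m ≥ N, ∀ n ≥ N, ∀ x ∈ closedBall c (R/4),
      norm (v (σ' m) x - v (σ' n) x) < ε := by
    intro ε hε
    set δ : ℝ := min (R/8) (ε/(4*(L+1))) with hδ
    have hδ0 : 0 < δ := lt_min (by linarith) (by positivity)
    have hδ1 : δ ≤ R/8 := min_le_left _ _
    have hδ2 : δ ≤ ε/(4*(L+1)) := min_le_right _ _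
    have hcover : closedBall c (R/4) ⊆
        ⋃ (i : {i : ℕ // d i ∈ ball c (R/2)}), ball (d i.1) δ := by
      intro x hx
      rw [mem_closedBall] at hx
      obtain ⟨i, hi⟩ := hdense.exists_dist_lt x hδ0
      have hdi : d i ∈ ball c (R/2) := by
        rw [mem_ball]
        calc dist (d i) c ≤ dist (d i) x + dist x c := dist_triangle _ _ _
        _ < δ + R/4 := by rw [dist_comm]; exact add_lt_add_of_lt_of_le hi hx
        _ ≤ R/8 + R/4 := by linarith
        _ < R/2 := by linarith
      exact Set.mem_iUnion.mpr ⟨⟨i, hdi⟩, by rw [mem_ball]; exact hi⟩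
    obtain ⟨t, ht⟩ := (isCompact_closedBall c (R/4)).elim_finite_subcover
      (fun i : {i : ℕ // d i ∈ ball c (R/2)} => ball (d i.1) δ) (fun i => isOpen_ball) hcover
    have hcau : ∀ i : {i : ℕ // d i ∈ ball c (R/2)}, ∃ N, ∀ m ≥ N, ∀ n ≥ N,
        dist (v (σ' m) (d i.1)) (v (σ' n) (d i.1)) < ε/4 := by
      intro i
      have hi : d i.1 ∈ ball c R := by
        have := i.2
        rw [mem_ball] at this ⊢
        linarith
      obtain ⟨l, hl⟩ := hptconv i.1 hi
      have hcs := hl.cauchySeq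
      rw [Metric.cauchySeq_iff] at hcs
      exact hcs (ε/4) (by linarith)
    choose Nf hNf using hcau
    refine ⟨t.sup Nf, ?_⟩
    intro m hm n hn x hx
    have hxU := ht hx
    rw [Set.mem_iUnion₂] at hxU
    obtain ⟨i, hit, hxi⟩ := hxU
    have hdi2 : d i.1 ∈ closedBall c (R/2) := ball_subset_closedBall i.2
    have hxball : x ∈ ball (d i.1) (R/4) := by
      rw [mem_ball] at hxi ⊢
      linarith
    have l1 := hlip (σ' m) (d i.1) hdi2 x hxball
    have l2 := hlip (σ' n) (d i.1) hdi2 x hxball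
    have l3 := hNf i m (le_trans (Finset.le_sup hit) hm) n (le_trans (Finset.le_sup hit) hn)
    rw [Complex.dist_eq] at l3
    have hxd : norm (x - d i.1) ≤ δ := by
      rw [mem_ball, Complex.dist_eq] at hxi
      exact le_of_lt hxi
    have hLδ : L * norm (x - d i.1) ≤ ε/4 := by
      calc L * norm (x - d i.1) ≤ L * δ :=
            mul_le_mul_of_nonneg_left hxd hL0.le
      _ ≤ L * (ε/(4*(L+1))) := mul_le_mul_of_nonneg_left hδ2 hL0.le
      _ = ε * (L / (4*(L+1))) := by ring
      _ ≤ ε * (1/4) := by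
            apply mul_le_mul_of_nonneg_left _ hε.le
            rw [div_le_div_iff₀ (by positivity) (by norm_num)]
            linarith
      _ = ε/4 := by ring
    calc norm (v (σ' m) x - v (σ' n) x)
        = norm ((v (σ' m) x - v (σ' m) (d i.1)) + ((v (σ' m) (d i.1) - v (σ' n) (d i.1))
            + (v (σ' n) (d i.1) - v (σ' n) x))) := by ring_nf
    _ ≤ norm (v (σ' m) x - v (σ' m) (d i.1)) + norm ((v (σ' m) (d i.1) - v (σ' n) (d i.1))
            + (v (σ' n) (d i.1) - v (σ' n) x)) := norm_add_le _ _
    _ ≤ norm (v (σ' m) x - v (σ' m) (d i.1)) + (norm (v (σ' m) (d i.1) - v (σ' n) (d i.1))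
            + norm (v (σ' n) (d i.1) - v (σ' n) x)) :=
          add_le_add le_rfl (norm_add_le _ _)
    _ ≤ L * norm (x - d i.1) + (ε/4 + L * norm (x - d i.1)) := by
          have e1 : norm (v (σ' n) (d i.1) - v (σ' n) x)
              = norm (v (σ' n) x - v (σ' n) (d i.1)) := norm_sub_rev _ _
          rw [e1]
          exact add_le_add l1 (add_le_add l3.le l2)
    _ ≤ ε/4 + (ε/4 + ε/4) := by
          have := hLδ
          gcongr
    _ < ε := by linarith
  set u : ℂ → ℂ := fun x =>
    Classical.epsilon (fun l => Tendsto (fun n => v (σ' n) x) atTop (nhds l)) with hu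
  have hulim : ∀ x ∈ closedBall c (R/4), Tendsto (fun n => v (σ' n) x) atTop (nhds (u x)) := by
    intro x hx
    have hcs : CauchySeq (fun n => v (σ' n) x) := by
      rw [Metric.cauchySeq_iff]
      intro ε hε
      obtain ⟨N, hN⟩ := hUC ε hε
      exact ⟨N, fun m hm n hn => by rw [Complex.dist_eq]; exact hN m hm n hn x hx⟩
    obtain ⟨l, hl⟩ := cauchySeq_tendsto_of_complete hcs
    exact Classical.epsilon_spec
      (p := fun l => Tendsto (fun n => v (σ' n) x) atTop (nhds l)) ⟨l, hl⟩
  refine ⟨σ', hσ'mono, u, ?_⟩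
  intro ε hε
  obtain ⟨N, hN⟩ := hUC (ε/2) (by linarith)
  refine ⟨N, fun n hn x hx => ?_⟩
  have hle : norm (v (σ' n) x - u x) ≤ ε/2 := by
    have htd : Tendsto (fun m => dist (v (σ' n) x) (v (σ' m) x)) atTop
        (nhds (dist (v (σ' n) x) (u x))) := tendsto_const_nhds.dist (hulim x hx)
    have hev : ∀ᶠ m in atTop, dist (v (σ' n) x) (v (σ' m) x) ≤ ε/2 :=
      eventually_atTop.mpr ⟨N, fun m hm =>
        le_of_lt (by rw [Complex.dist_eq]; exact hN n hn m hm x hx)⟩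
    have := le_of_tendsto htd hev
    rw [Complex.dist_eq] at this
    exact this
  linarith


lemma exists_abs_gt {g : ℂ → ℂ} (hg : TranscendentalEntire g) (M : ℝ) :
    ∃ b : ℂ, M < norm (g b) := by
  by_contra h
  push_neg at h
  have hbd : Bornology.IsBounded (Set.range g) := by
    apply (Metric.isBounded_closedBall (x := (0:ℂ)) (r := M)).subset
    rintro _ ⟨x, rfl⟩
    rw [Metric.mem_closedBall, dist_zero_right]
    exact h x
  have hdiff : Differentiable ℂ g := hg.1
  obtain ⟨a, ha⟩ := hdiff.exists_eq_const_of_bounded hbd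
  exact hg.2 (Polynomial.C a) (by funext w; rw [ha]; simp)

lemma iterate_comm {f g : ℂ → ℂ} (hfg : Permutable f g) (m : ℕ) (x : ℂ) :
    g (f^[m] x) = f^[m] (g x) := by
  have h : ∀ y, f (g y) = g (f y) := fun y => congrFun hfg y
  induction m with
  | zero => simp
  | succ m ih => rw [Function.iterate_succ_apply', Function.iterate_succ_apply', ← ih, ← h]

lemma lipschitz_P_some : LipschitzWith 2 (fun a : ℂ => P (Option.some a)) := by
  apply LipschitzWith.of_dist_le_mul
  intro a b
  rw [← sphDist_eq]
  calc sphDist (Option.some a) (Option.some b) ≤ 2 * norm (a - b) := sphDist_some_le a b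
  _ = 2 * dist a b := by rw [Complex.dist_eq]
  _ = (2:NNReal) * dist a b := by norm_num

lemma continuous_P_some {h : ℂ → ℂ} (hh : Continuous h) :
    Continuous fun w => P (Option.some (h w)) :=
  lipschitz_P_some.continuous.comp hh


open Filter Metric in
lemma normal_pullback {f g : ℂ → ℂ} (hf : TranscendentalEntire f) (hg : TranscendentalEntire g)
    (hfg : Permutable f g) {U : Set ℂ} (hUo : IsOpen U) (hUn : NormalOn f U)
    {z : ℂ} (hzU : g z ∈ U) : z ∈ FatouSet f := by
  classical
  have hgc : Continuous g := hg.1.continuous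
  have hpre : g ⁻¹' U ∈ nhds z := hgc.continuousAt.preimage_mem_nhds (hUo.mem_nhds hzU)
  obtain ⟨r, hr, hball⟩ := Metric.mem_nhds_iff.mp hpre
  refine ⟨Metric.ball z r, Metric.isOpen_ball, Metric.mem_ball_self hr, ?_⟩
  intro k
  obtain ⟨s₀, hs₀, φ₀, hφ₀⟩ := hUn k
  set H : ℕ → ℂ → ℂ := fun n => f^[k (s₀ n)] with hH
  have hHdiff : ∀ n, Differentiable ℂ (H n) := fun n => hf.1.iterate _
  have hHcont : ∀ n, Continuous (H n) := fun n => (hHdiff n).continuous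
  have base : ∀ K : Set ℂ, K ⊆ Metric.ball z r → IsCompact K →
      UCP (fun n w => g (H n w)) (fun w => φ₀ (g w)) K := by
    intro K hK hKc ε hε
    obtain ⟨N, hN⟩ := hφ₀ (g '' K) (Set.image_subset_iff.mpr (hK.trans hball))
      (hKc.image hgc) ε hε
    refine ⟨N, fun n hn w hw => ?_⟩
    have h1 := hN n hn (g w) ⟨w, hw, rfl⟩
    have h2 : f^[(k ∘ s₀) n] (g w) = g (H n w) := (iterate_comm hfg _ _).symm
    rwa [h2] at h1
  -- local avoidance of a small disk by the H n
  have avoid : ∀ w₀ ∈ Metric.ball z r, ∃ t, 0 < t ∧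
      Metric.closedBall w₀ t ⊆ Metric.ball z r ∧
      ∃ b : ℂ, ∃ ρ : ℝ, 0 < ρ ∧ ∃ N₀, ∀ n ≥ N₀, ∀ w ∈ Metric.closedBall w₀ t,
        ρ ≤ norm (H n w - b) := by
    intro w₀ hw₀
    have hw₀r : dist w₀ z < r := Metric.mem_ball.mp hw₀
    set t₁ : ℝ := (r - dist w₀ z)/2 with ht₁
    have ht₁pos : 0 < t₁ := by rw [ht₁]; linarith
    have hsub : Metric.closedBall w₀ t₁ ⊆ Metric.ball z r := by
      intro ξ hξ
      rw [Metric.mem_closedBall] at hξ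
      rw [Metric.mem_ball]
      calc dist ξ z ≤ dist ξ w₀ + dist w₀ z := dist_triangle _ _ _
      _ ≤ t₁ + dist w₀ z := by linarith
      _ < r := by rw [ht₁]; linarith
    have hUCψ : UCP (fun n w => g (H n w)) (fun w => φ₀ (g w)) (Metric.closedBall w₀ t₁) :=
      base _ hsub (isCompact_closedBall _ _)
    have hψat : ContinuousAt (fun w => P (φ₀ (g w))) w₀ := by
      have hTU : TendstoUniformlyOn (fun n w => P (Option.some (g (H n w))))
          (fun w => P (φ₀ (g w))) atTop (Metric.closedBall w₀ t₁) := by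
        rw [Metric.tendstoUniformlyOn_iff]
        intro ε hε
        obtain ⟨N, hN⟩ := hUCψ ε hε
        rw [eventually_atTop]
        refine ⟨N, fun n hn x hx => ?_⟩
        rw [dist_comm, ← sphDist_eq]
        exact hN n hn x hx
      have hcont : ContinuousOn (fun w => P (φ₀ (g w))) (Metric.closedBall w₀ t₁) :=
        hTU.continuousOn (Filter.Eventually.of_forall (f := atTop) fun n =>
          (continuous_P_some (hgc.comp (hHcont n))).continuousOn).frequently
      exact hcont.continuousAt (Metric.closedBall_mem_nhds w₀ ht₁pos)
    obtain ⟨ξ₀, hξ₀mem, hξ₀max⟩ := (isCompact_closedBall (0:ℂ) 1).exists_isMaxOn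
      (Metric.nonempty_closedBall.mpr (by norm_num))
      ((continuous_norm.comp hgc).continuousOn)
    rw [isMaxOn_iff] at hξ₀max
    set B := norm (g ξ₀) with hBdef
    set M' := B + 1 with hM'
    have hB0 : 0 ≤ B := norm_nonneg _
    have hM'pos : 0 < M' := by rw [hM']; linarith
    set ε' := 2 / Real.sqrt (1 + M'^2) with hε'def
    have hε'pos : 0 < ε' := by rw [hε'def]; positivity
    by_cases hcase : sphDist (φ₀ (g w₀)) Option.none < ε'/2
    · -- limit is near infinity: iterates avoid the unit disk
      obtain ⟨δ, hδpos, hδ⟩ := Metric.continuousAt_iff.mp hψat (ε'/4) (by linarith)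
      set t := min t₁ (δ/2) with htdef
      have htpos : 0 < t := lt_min ht₁pos (by linarith)
      obtain ⟨N₀, hN₀⟩ := hUCψ (ε'/4) (by linarith)
      refine ⟨t, htpos,
        (Metric.closedBall_subset_closedBall (min_le_left _ _)).trans hsub,
        0, 1, one_pos, N₀, ?_⟩
      intro n hn w hw
      have hw₁ : w ∈ Metric.closedBall w₀ t₁ :=
        Metric.closedBall_subset_closedBall (min_le_left _ _) hw
      have hwδ : dist w w₀ < δ := by
        have h0 := Metric.mem_closedBall.mp hw
        have : t ≤ δ/2 := min_le_right _ _
        linarith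
      have h1 : sphDist (Option.some (g (H n w))) (φ₀ (g w)) < ε'/4 := hN₀ n hn w hw₁
      have h2 : sphDist (φ₀ (g w)) (φ₀ (g w₀)) < ε'/4 := by
        rw [sphDist_eq]
        exact hδ hwδ
      have h3 : sphDist (Option.some (g (H n w))) Option.none < ε' := by
        calc sphDist (Option.some (g (H n w))) Option.none
            ≤ sphDist (Option.some (g (H n w))) (φ₀ (g w)) + sphDist (φ₀ (g w)) Option.none :=
              sphDist_triangle _ _ _
        _ ≤ sphDist (Option.some (g (H n w))) (φ₀ (g w)) +
              (sphDist (φ₀ (g w)) (φ₀ (g w₀)) + sphDist (φ₀ (g w₀)) Option.none) :=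
              add_le_add le_rfl (sphDist_triangle _ _ _)
        _ < ε'/4 + (ε'/4 + ε'/2) := by
              apply add_lt_add h1
              exact add_lt_add h2 hcase
        _ = ε' := by ring
      have h4 : M' < norm (g (H n w)) :=
        abs_lt_of_sphDist_lt hM'pos.le (by rw [← hε'def]; exact h3)
      by_contra hcon
      push_neg at hcon
      have hmem : H n w ∈ Metric.closedBall (0:ℂ) 1 := by
        rw [Metric.mem_closedBall, Complex.dist_eq]
        exact le_of_lt hcon
      have hle := hξ₀max (H n w) hmem
      simp only [Function.comp_apply] at hle
      rw [← hBdef] at hle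
      linarith
    · -- limit stays finite: iterates avoid a disk where |g| is large
      push_neg at hcase
      set M := 2 / (ε'/4) with hMdef
      have hMpos : 0 < M := by rw [hMdef]; positivity
      obtain ⟨b, hb⟩ := exists_abs_gt hg (M + 1)
      obtain ⟨δb, hδbpos, hδb⟩ := Metric.continuousAt_iff.mp hgc.continuousAt 1 one_pos
      set ρ := min (δb/2) 1 with hρdef
      have hρpos : 0 < ρ := lt_min (by linarith) one_pos
      have hgball : ∀ ξ ∈ Metric.closedBall b ρ, M < norm (g ξ) := by
        intro ξ hξ
        have hξδ : dist ξ b < δb := by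
          have h0 := Metric.mem_closedBall.mp hξ
          have : ρ ≤ δb/2 := min_le_left _ _
          linarith
        have h5 := hδb hξδ
        rw [Complex.dist_eq] at h5
        have h6 : |norm (g b) - norm (g ξ)| ≤ norm (g b - g ξ) :=
          abs_norm_sub_norm_le _ _
        have h7 : norm (g b - g ξ) = norm (g ξ - g b) :=
          norm_sub_rev _ _
        have h8 := le_abs_self (norm (g b) - norm (g ξ))
        linarith
      obtain ⟨δ, hδpos, hδ⟩ := Metric.continuousAt_iff.mp hψat (ε'/8) (by linarith)
      set t := min t₁ (δ/2) with htdef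
      have htpos : 0 < t := lt_min ht₁pos (by linarith)
      obtain ⟨N₀, hN₀⟩ := hUCψ (ε'/8) (by linarith)
      refine ⟨t, htpos,
        (Metric.closedBall_subset_closedBall (min_le_left _ _)).trans hsub,
        b, ρ, hρpos, N₀, ?_⟩
      intro n hn w hw
      have hw₁ : w ∈ Metric.closedBall w₀ t₁ :=
        Metric.closedBall_subset_closedBall (min_le_left _ _) hw
      have hwδ : dist w w₀ < δ := by
        have h0 := Metric.mem_closedBall.mp hw
        have : t ≤ δ/2 := min_le_right _ _
        linarith
      have h1 : sphDist (Option.some (g (H n w))) (φ₀ (g w)) < ε'/8 := hN₀ n hn w hw₁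
      have h2 : sphDist (φ₀ (g w)) (φ₀ (g w₀)) < ε'/8 := by
        rw [sphDist_eq]
        exact hδ hwδ
      have h3 : ε'/4 ≤ sphDist (Option.some (g (H n w))) Option.none := by
        have tri : sphDist (φ₀ (g w₀)) Option.none
            ≤ sphDist (φ₀ (g w₀)) (φ₀ (g w)) + (sphDist (φ₀ (g w)) (Option.some (g (H n w)))
              + sphDist (Option.some (g (H n w))) Option.none) := by
          calc sphDist (φ₀ (g w₀)) Option.none
              ≤ sphDist (φ₀ (g w₀)) (φ₀ (g w)) + sphDist (φ₀ (g w)) Option.none :=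
                sphDist_triangle _ _ _
          _ ≤ _ := add_le_add le_rfl (sphDist_triangle _ _ _)
        rw [sphDist_comm (φ₀ (g w₀)) (φ₀ (g w))] at tri
        rw [sphDist_comm (φ₀ (g w)) (Option.some (g (H n w)))] at tri
        linarith [hcase]
      have h4 : norm (g (H n w)) ≤ M := by
        rw [hMdef]
        exact abs_le_of_sphDist_ge (by positivity) h3
      by_contra hcon
      push_neg at hcon
      have hmem : H n w ∈ Metric.closedBall b ρ := by
        rw [Metric.mem_closedBall, Complex.dist_eq]
        exact le_of_lt hcon
      exact absurd h4 (not_le.mpr (hgball _ hmem))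
  -- countable family of candidate closed balls
  obtain ⟨d, hdense⟩ := TopologicalSpace.exists_dense_seq ℂ
  set E := Denumerable.eqv (ℕ × ℚ) with hE
  set Dctr : ℕ → ℂ := fun j => d (E.symm j).1 with hDctr
  set Drad : ℕ → ℝ := fun j => ((E.symm j).2 : ℝ) with hDrad
  set good : ℕ → (ℕ → ℕ) → Prop := fun j σ =>
    ∃ φl : ℂ → Option ℂ, UCP (fun n => H (σ n)) φl
      (Metric.closedBall (Dctr j) (Drad j)) with hgood
  obtain ⟨σS, hσS, hdiag⟩ := diagonal_subseq good
  have keylocal : ∀ w ∈ Metric.ball z r, ∃ j,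
      w ∈ Metric.ball (Dctr j) (Drad j) ∧
      (∀ θ : ℕ → ℕ, StrictMono θ → ∃ τ, StrictMono τ ∧ good j (θ ∘ τ)) := by
    intro w hw
    obtain ⟨t, htpos, htsub, b, ρ, hρpos, N₀, havoid⟩ := avoid w hw
    obtain ⟨i, hi⟩ := hdense.exists_dist_lt w (show (0:ℝ) < t/16 by linarith)
    obtain ⟨q, hq1, hq2⟩ := exists_rat_btwn (show (t/16 : ℝ) < t/10 by linarith)
    set j := E (i, q) with hj
    have hjc : Dctr j = d i := by rw [hDctr, hj]; simp
    have hjr : Drad j = (q : ℝ) := by rw [hDrad, hj]; simp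
    have hqpos : (0:ℝ) < q := lt_trans (by linarith) hq1
    have hwj : w ∈ Metric.ball (Dctr j) (Drad j) := by
      rw [hjc, hjr, Metric.mem_ball]
      exact lt_trans hi hq1
    have hbig : Metric.ball (d i) (8*q) ⊆ Metric.closedBall w t := by
      intro ξ hξ
      rw [Metric.mem_ball] at hξ
      rw [Metric.mem_closedBall]
      have hdw : dist (d i) w < t/16 := by rw [dist_comm]; exact hi
      calc dist ξ w ≤ dist ξ (d i) + dist (d i) w := dist_triangle _ _ _
      _ ≤ 8*q + t/16 := by linarith
      _ ≤ t := by linarith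
    refine ⟨j, hwj, ?_⟩
    intro θ hθ
    set v : ℕ → ℂ → ℂ := fun n w' => (H (θ (N₀ + n)) w' - b)⁻¹ with hv
    have hθge : ∀ n, N₀ ≤ θ (N₀ + n) :=
      fun n => le_trans (Nat.le_add_right N₀ n) hθ.le_apply
    have hvne : ∀ n, ∀ w' ∈ Metric.ball (d i) (8*q),
        ρ ≤ norm (H (θ (N₀ + n)) w' - b) :=
      fun n w' hw' => havoid _ (hθge n) _ (hbig hw')
    have hvdiff : ∀ n, DifferentiableOn ℂ (v n) (Metric.ball (d i) (8*q)) := by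
      intro n
      apply DifferentiableOn.inv
      · exact ((hHdiff _).sub_const b).differentiableOn
      · intro x hx h0
        have h1 := hvne n x hx
        rw [h0] at h1
        simp at h1
        linarith
    have hvbd : ∀ n, ∀ w' ∈ Metric.ball (d i) (8*q), norm (v n w') ≤ ρ⁻¹ := by
      intro n w' hw'
      show norm ((H (θ (N₀ + n)) w' - b)⁻¹) ≤ ρ⁻¹
      rw [norm_inv]
      exact inv_anti₀ hρpos (hvne n w' hw')
    obtain ⟨τ₀, hτ₀, u, hu⟩ := montel v (d i) (8*q) ρ⁻¹ (by linarith) hvdiff hvbd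
    refine ⟨fun n => N₀ + τ₀ n, fun a b' hab => Nat.add_lt_add_left (hτ₀ hab) N₀, ?_⟩
    show ∃ φl : ℂ → Option ℂ, UCP (fun n => H ((θ ∘ fun n => N₀ + τ₀ n) n)) φl
      (Metric.closedBall (Dctr j) (Drad j))
    refine ⟨fun w' => sphMob b (Option.some (u w')), ?_⟩
    intro ε hε
    set Cb := (2*(1 + norm b^2))^2 with hCb
    have hCb1 : (1:ℝ) ≤ Cb := by
      rw [hCb]
      nlinarith [sq_nonneg (norm b), norm_nonneg b]
    obtain ⟨N, hN⟩ := hu (ε/(2*Cb+2)) (by positivity)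
    refine ⟨N, fun n hn w' hw' => ?_⟩
    rw [hjc, hjr] at hw'
    have hw'2 : w' ∈ Metric.closedBall (d i) (8*q/4) :=
      Metric.closedBall_subset_closedBall (by linarith) hw'
    have hvlt := hN n hn w' hw'2
    have hw't : w' ∈ Metric.closedBall w t := by
      apply hbig
      rw [Metric.mem_ball]
      exact lt_of_le_of_lt (Metric.mem_closedBall.mp hw') (by linarith)
    have hρn : ρ ≤ norm (H (θ (N₀ + τ₀ n)) w' - b) := havoid _ (hθge (τ₀ n)) _ hw't
    have hne0 : H (θ (N₀ + τ₀ n)) w' - b ≠ 0 := by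
      intro h0
      rw [h0] at hρn
      simp at hρn
      linarith
    have hvn0 : v (τ₀ n) w' ≠ 0 := inv_ne_zero hne0
    have hMob : sphMob b (Option.some (v (τ₀ n) w'))
        = Option.some (H (θ (N₀ + τ₀ n)) w') := by
      rw [sphMob, sphInv_some _ hvn0, sphTr_some]
      show Option.some ((H (θ (N₀ + τ₀ n)) w' - b)⁻¹⁻¹ + b) = _
      rw [inv_inv, sub_add_cancel]
    calc sphDist (Option.some (H ((θ ∘ fun n => N₀ + τ₀ n) n) w'))
          (sphMob b (Option.some (u w')))
        = sphDist (sphMob b (Option.some (v (τ₀ n) w'))) (sphMob b (Option.some (u w'))) := by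
          rw [hMob]; rfl
    _ ≤ Cb * sphDist (Option.some (v (τ₀ n) w')) (Option.some (u w')) := by
          rw [hCb]; exact sphMob_lipschitz b _ _
    _ ≤ Cb * (2 * norm (v (τ₀ n) w' - u w')) :=
          mul_le_mul_of_nonneg_left (sphDist_some_le _ _) (by linarith)
    _ ≤ Cb * (2 * (ε/(2*Cb+2))) := by
          apply mul_le_mul_of_nonneg_left _ (by linarith : (0:ℝ) ≤ Cb)
          apply mul_le_mul_of_nonneg_left hvlt.le (by norm_num)
    _ < ε := by
          have hCb0 : (0:ℝ) < Cb := by linarith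
          rw [show Cb * (2 * (ε/(2*Cb+2))) = ε * ((2*Cb)/(2*Cb+2)) by ring]
          have hlt : (2*Cb)/(2*Cb+2) < 1 := by
            rw [div_lt_one (by linarith)]
            linarith
          calc ε * ((2*Cb)/(2*Cb+2)) < ε * 1 := by
                apply mul_lt_mul_of_pos_left hlt hε
          _ = ε := by ring
  -- the global limit function
  set φg : ℂ → Option ℂ := fun w => Classical.epsilon
    (fun x : Option ℂ =>
      Tendsto (fun n => P (Option.some (H (σS n) w))) atTop (nhds (P x))) with hφg
  have master : ∀ j, (∀ θ : ℕ → ℕ, StrictMono θ → ∃ τ, StrictMono τ ∧ good j (θ ∘ τ)) →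
      ∃ φl : ℂ → Option ℂ, UCP (fun n => H (σS n)) φl
        (Metric.closedBall (Dctr j) (Drad j)) := by
    intro j hj
    obtain ⟨θ, hθm, hgj, htail⟩ := hdiag j hj
    obtain ⟨φl, hφl⟩ := hgj
    exact ⟨φl, UCP_transfer hφl htail⟩
  have hφg_eq : ∀ j, ∀ φl : ℂ → Option ℂ,
      UCP (fun n => H (σS n)) φl (Metric.closedBall (Dctr j) (Drad j)) →
      ∀ x ∈ Metric.closedBall (Dctr j) (Drad j), sphDist (φl x) (φg x) = 0 := by
    intro j φl hUC x hx
    have T1 : Tendsto (fun n => P (Option.some (H (σS n) x))) atTop (nhds (P (φl x))) :=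
      hUC.tendstoP hx
    have T2 : Tendsto (fun n => P (Option.some (H (σS n) x))) atTop (nhds (P (φg x))) := by
      rw [hφg]
      exact Classical.epsilon_spec
        (p := fun xx : Option ℂ =>
          Tendsto (fun n => P (Option.some (H (σS n) x))) atTop (nhds (P xx))) ⟨φl x, T1⟩
    rw [sphDist_eq, tendsto_nhds_unique T1 T2, dist_self]
  refine ⟨s₀ ∘ σS, hs₀.comp hσS, φg, ?_⟩
  intro K hK hKc ε hε
  have hKloc : ∀ w : ℂ, w ∈ K → ∃ j, w ∈ Metric.ball (Dctr j) (Drad j) ∧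
      (∀ θ : ℕ → ℕ, StrictMono θ → ∃ τ, StrictMono τ ∧ good j (θ ∘ τ)) :=
    fun w hw => keylocal w (hK hw)
  choose! jw hjw1 hjw2 using hKloc
  have hcov : K ⊆ ⋃ w : K, Metric.ball (Dctr (jw w.1)) (Drad (jw w.1)) := by
    intro x hx
    exact Set.mem_iUnion.mpr ⟨⟨x, hx⟩, hjw1 x hx⟩
  obtain ⟨t, ht⟩ := hKc.elim_finite_subcover
    (fun w : K => Metric.ball (Dctr (jw w.1)) (Drad (jw w.1)))
    (fun w => Metric.isOpen_ball) hcov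
  have hexN : ∀ w : K, ∃ N, ∀ n ≥ N, ∀ x ∈ Metric.ball (Dctr (jw w.1)) (Drad (jw w.1)),
      sphDist (Option.some (H (σS n) x)) (φg x) < ε := by
    intro w
    obtain ⟨φl, hφl⟩ := master (jw w.1) (hjw2 w.1 w.2)
    obtain ⟨N, hN⟩ := hφl (ε/2) (by linarith)
    refine ⟨N, fun n hn x hx => ?_⟩
    have hxD : x ∈ Metric.closedBall (Dctr (jw w.1)) (Drad (jw w.1)) :=
      Metric.ball_subset_closedBall hx
    have h1 := hN n hn x hxD
    have h2 := hφg_eq (jw w.1) φl hφl x hxD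
    have tri := sphDist_triangle (Option.some (H (σS n) x)) (φl x) (φg x)
    rw [h2] at tri
    linarith
  choose Nf hNf using hexN
  refine ⟨t.sup Nf, ?_⟩
  intro n hn x hx
  obtain ⟨w, hwt, hxw⟩ := Set.mem_iUnion₂.mp (ht hx)
  exact hNf w n (le_trans (Finset.le_sup hwt) hn) x hxw

end JuliaAux

/-- For permutable transcendental entire functions `f` and `g`,
`g(J(f)) ⊆ J(f)`. -/
theorem image_julia_subset
    (f g : ℂ → ℂ) (hf : TranscendentalEntire f) (hg : TranscendentalEntire g)
    (hfg : Permutable f g) :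
    g '' JuliaSet f ⊆ JuliaSet f := by
  rintro y ⟨z, hzJ, rfl⟩
  rw [JuliaSet, Set.mem_compl_iff]
  intro hgz
  obtain ⟨U, hUo, hzU, hUn⟩ := hgz
  exact hzJ (JuliaAux.normal_pullback hf hg hfg hUo hUn hzU)
end
end
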